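/- Let A be an associative unital k-algebra and f ∈ A^∨. There exist functionals g₁,…,gₙ, h₁,…,hₙ ∈ A^∨ with f(xy) = Σᵢ gᵢ(x)hᵢ(y) for all x, y ∈ A if and only if there exist n ∈ ℕ, a row vector λ ∈ k^{1×n}, a column vector γ ∈ k^{n×1}, and a unital algebra morphism μ : A → Mₙ(k) such that f(s) = λ μ(s) γ for all s ∈ A. -/

import Mathlib

section Aux

variable (k : Type*) [Field k] (A : Type*) [Ring A] [Algebra k A]

/-- Right-translation representation of `A` on its dual: `(ρ s v) x = v (x * s)`. -/
private def rhoAux : A →ₐ[k] Module.End k (Module.Dual k A) where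
  toFun s := (LinearMap.mulRight k s).dualMap
  map_one' := by ext v x; simp
  map_mul' a b := by ext v x; simp [Module.End.mul_apply, mul_assoc]
  map_zero' := by ext v x; simp
  map_add' a b := by ext v x; simp [mul_add]
  commutes' c := by
    ext v x
    simp [Algebra.algebraMap_eq_smul_one, mul_smul_comm, Module.algebraMap_end_apply]

@[simp] private lemma rhoAux_apply (s : A) (v : Module.Dual k A) (x : A) :
    rhoAux k A s v x = v (x * s) := rfl

/-- Restriction of `rhoAux` to an invariant subspace. -/
private def sigmaAux (V : Submodule k (Module.Dual k A))
    (hV : ∀ s : A, ∀ v ∈ V, rhoAux k A s v ∈ V) : A →ₐ[k] Module.End k V where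
  toFun s := (rhoAux k A s).restrict (hV s)
  map_one' := by
    ext v
    simp only [LinearMap.restrict_coe_apply, map_one, Module.End.one_apply]
  map_mul' a b := by
    ext v
    simp only [LinearMap.restrict_coe_apply, map_mul, Module.End.mul_apply]
  map_zero' := by
    ext v
    simp only [LinearMap.restrict_coe_apply, map_zero, LinearMap.zero_apply,
      Submodule.coe_zero]
  map_add' a b := by
    ext v
    simp only [LinearMap.restrict_coe_apply, map_add, LinearMap.add_apply,
      Submodule.coe_add]
  commutes' c := by
    ext v
    simp only [LinearMap.restrict_coe_apply, AlgHom.commutes,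
      Module.algebraMap_end_apply, SetLike.val_smul]

@[simp] private lemma sigmaAux_apply_coe (V : Submodule k (Module.Dual k A))
    (hV : ∀ s : A, ∀ v ∈ V, rhoAux k A s v ∈ V) (s : A) (v : V) :
    (sigmaAux k A V hV s v : Module.Dual k A) = rhoAux k A s v := rfl

/-- Evaluation at `1 ∈ A` as a linear functional on a subspace of the dual. -/
private def evalOneAux (V : Submodule k (Module.Dual k A)) : V →ₗ[k] k where
  toFun v := (v : Module.Dual k A) 1
  map_add' u v := by simp
  map_smul' c v := by simp

@[simp] private lemma evalOneAux_apply (V : Submodule k (Module.Dual k A)) (v : V) :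
    evalOneAux k A V v = (v : Module.Dual k A) 1 := rfl

end Aux

set_option maxHeartbeats 1600000 in
/-- `f(xy)` factors as a finite sum `Σᵢ gᵢ(x)hᵢ(y)` iff `f` is recognizable
by a finite-dimensional matrix representation: `f(s) = λ μ(s) γ`. -/
theorem factorization_iff_matrix_representation (k : Type*) [Field k]
    (A : Type*) [Ring A] [Algebra k A] (f : Module.Dual k A) :
    (∃ (n : ℕ) (g h : Fin n → Module.Dual k A),
        ∀ x y : A, f (x * y) = ∑ i, g i x * h i y) ↔
    (∃ (n : ℕ) (l : Matrix (Fin 1) (Fin n) k) (γ : Matrix (Fin n) (Fin 1) k)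
        (μ : A →ₐ[k] Matrix (Fin n) (Fin n) k),
        ∀ s : A, f s = (l * μ s * γ) 0 0) := by
  classical
  constructor
  · rintro ⟨n, g, h, hf⟩
    -- the orbit map `T s = f ∘ (· * s)`
    set T : A →ₗ[k] Module.Dual k A :=
      { toFun := fun s => f.comp (LinearMap.mulRight k s)
        map_add' := by intro a b; ext x; simp [mul_add]
        map_smul' := by intro c a; ext x; simp [mul_smul_comm] } with hTdef
    have hTapp : ∀ s x : A, T s x = f (x * s) := fun s x => rfl
    have hT : ∀ s : A, T s = ∑ i, h i s • g i := by
      intro s; ext x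
      simp [hTapp, hf, mul_comm]
    set V : Submodule k (Module.Dual k A) := LinearMap.range T with hVdef
    have hVle : V ≤ Submodule.span k (Set.range g) := by
      rintro _ ⟨s, rfl⟩
      rw [hT]
      exact Submodule.sum_mem _ fun i _ =>
        Submodule.smul_mem _ _ (Submodule.subset_span ⟨i, rfl⟩)
    haveI : FiniteDimensional k (Submodule.span k (Set.range g)) :=
      FiniteDimensional.span_of_finite k (Set.finite_range g)
    haveI : FiniteDimensional k V := Submodule.finiteDimensional_of_le hVle
    have hρT : ∀ s t : A, rhoAux k A s (T t) = T (s * t) := by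
      intro s t; ext x
      simp [hTapp, mul_assoc]
    have hVinv : ∀ s : A, ∀ v ∈ V, rhoAux k A s v ∈ V := by
      rintro s _ ⟨t, rfl⟩
      exact ⟨s * t, (hρT s t).symm⟩
    set σ : A →ₐ[k] Module.End k V := sigmaAux k A V hVinv with hσdef
    have hfmem : f ∈ V := ⟨1, by ext x; simp [hTapp]⟩
    set fV : V := ⟨f, hfmem⟩ with hfVdef
    haveI : Module.Free k V := Module.Free.of_divisionRing k V
    set m := Module.finrank k V with hm
    set b : Module.Basis (Fin m) k V := Module.finBasis k V with hb
    set E : V →ₗ[k] k := evalOneAux k A V with hE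
    set μ0 : A →ₐ[k] Matrix (Fin m) (Fin m) k :=
      ((LinearMap.toMatrixAlgEquiv b : Module.End k V ≃ₐ[k] _) : Module.End k V →ₐ[k] _).comp σ
      with hμ0
    have hμ0app : ∀ s : A, μ0 s = LinearMap.toMatrixAlgEquiv b (σ s) := fun _ => rfl
    refine ⟨m, (fun _ i => E (b i)), (fun j _ => b.repr fV j), μ0, ?_⟩
    intro s
    set M : Matrix (Fin m) (Fin m) k := LinearMap.toMatrixAlgEquiv b (σ s) with hM
    have key : f s = E (σ s fV) := by
      simp [hE, hσdef, hfVdef]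
    have hexp2 : ∀ j, σ s (b j) = ∑ i, M i j • b i := by
      intro j
      conv_lhs => rw [← b.sum_repr (σ s (b j))]
      simp [hM, LinearMap.toMatrixAlgEquiv_apply]
    have hexp : E (σ s fV) = ∑ j, b.repr fV j * ∑ i, M i j * E (b i) := by
      conv_lhs => rw [← b.sum_repr fV]
      rw [map_sum, map_sum]
      refine Finset.sum_congr rfl fun j _ => ?_
      rw [map_smul, map_smul, hexp2, map_sum, smul_eq_mul]
      simp [smul_eq_mul]
    rw [hμ0app, ← hM, key, hexp]
    simp only [Matrix.mul_apply, Finset.sum_mul, Finset.mul_sum]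
    refine Finset.sum_congr rfl fun j _ => ?_
    beta_reduce
    change _ = (∑ i, E (b i) * M i j) * _
    rw [Finset.sum_mul]
    refine Finset.sum_congr rfl fun i _ => ?_
    ring
  · rintro ⟨n, l, γ, μ, hμ⟩
    refine ⟨n, fun i =>
      { toFun := fun x => (l * μ x) 0 i
        map_add' := by intro a b; simp [Matrix.mul_add]
        map_smul' := by intro c a; simp [Matrix.mul_smul] },
      fun i =>
      { toFun := fun y => (μ y * γ) i 0
        map_add' := by intro a b; simp [Matrix.add_mul]
        map_smul' := by intro c a; simp [Matrix.smul_mul] }, ?_⟩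
    intro x y
    rw [hμ, map_mul, show l * (μ x * μ y) * γ = (l * μ x) * (μ y * γ) by
      rw [← Matrix.mul_assoc, ← Matrix.mul_assoc]]
    simp [Matrix.mul_apply]
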